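/- For positive reals a, b with s·a ≤ b ≤ t·a for some 0 < s ≤ t ≤ 1, and v ∈ [0,1]: f_v(t)·a^(1-v)·b^v ≤ (1-v)a + vb ≤ f_v(s)·a^(1-v)·b^v, where f_v(x) = ((1-v)+vx)/x^v. -/

import Mathlib

open Real Set

lemma aux_anti (v : ℝ) (hv0 : 0 ≤ v) (hv1 : v ≤ 1) {x y : ℝ} (hx : 0 < x)
    (hxy : x ≤ y) (hy1 : y ≤ 1) :
    ((1 - v) + v * y) / y ^ v ≤ ((1 - v) + v * x) / x ^ v := by
  set F : ℝ → ℝ := fun z => (1 - v) * z ^ (-v) + v * z ^ (1 - v) with hF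
  have hderiv : ∀ z ∈ Ioo x 1, HasDerivAt F
      ((1 - v) * ((-v) * z ^ (-v - 1)) + v * ((1 - v) * z ^ (1 - v - 1))) z := by
    intro z hz
    have hz0 : z ≠ 0 := ne_of_gt (hx.trans hz.1)
    have h1 := (Real.hasDerivAt_rpow_const (x := z) (p := -v) (Or.inl (ne_of_gt (hx.trans hz.1)))).const_mul (1 - v)
    have h2 := (Real.hasDerivAt_rpow_const (x := z) (p := 1 - v) (Or.inl (ne_of_gt (hx.trans hz.1)))).const_mul v
    exact h1.add h2
  have hanti : AntitoneOn F (Icc x 1) := by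
    apply antitoneOn_of_deriv_nonpos (convex_Icc x 1)
    · apply ContinuousOn.add
      · exact (continuousOn_id.rpow_const (fun z hz => Or.inl (ne_of_gt (lt_of_lt_of_le hx hz.1)))).const_smul (1 - v)
      · exact (continuousOn_id.rpow_const (fun z hz => Or.inl (ne_of_gt (lt_of_lt_of_le hx hz.1)))).const_smul v
    · rw [interior_Icc]
      exact fun z hz => ((hderiv z hz).differentiableAt).differentiableWithinAt
    · rw [interior_Icc]
      intro z hz
      rw [(hderiv z hz).deriv]
      have hz0 : 0 < z := hx.trans hz.1
      have he : (1:ℝ) - v - 1 = -v := by ring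
      rw [he]
      have key : z ^ (-v) ≤ z ^ (-v - 1) :=
        Real.rpow_le_rpow_of_exponent_ge hz0 hz.2.le (by linarith)
      have h1v : 0 ≤ 1 - v := by linarith
      nlinarith [mul_nonneg (mul_nonneg hv0 h1v) (sub_nonneg.mpr key)]
  have hEq : ∀ z, 0 < z → F z = ((1 - v) + v * z) / z ^ v := by
    intro z hz
    have : z ^ ((1:ℝ) - v) = z / z ^ v := by
      rw [Real.rpow_sub hz, Real.rpow_one]
    rw [hF]
    simp only
    rw [this, Real.rpow_neg hz.le]
    field_simp
    try ring
  have := hanti (Set.mem_Icc.mpr ⟨le_refl x, hxy.trans hy1⟩) (Set.mem_Icc.mpr ⟨hxy, hy1⟩) hxy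
  rwa [hEq x hx, hEq y (hx.trans_le hxy)] at this

theorem stmt_12 (a b s t v : ℝ) (ha : 0 < a) (hb : 0 < b)
    (hs : 0 < s) (hst : s ≤ t) (ht : t ≤ 1)
    (hsa : s * a ≤ b) (hbt : b ≤ t * a) (hv0 : 0 ≤ v) (hv1 : v ≤ 1) :
    ((1 - v) + v * t) / t ^ v * (a ^ (1 - v) * b ^ v) ≤ (1 - v) * a + v * b ∧
    (1 - v) * a + v * b ≤ ((1 - v) + v * s) / s ^ v * (a ^ (1 - v) * b ^ v) := by
  set r := b / a with hr
  have hr0 : 0 < r := div_pos hb ha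
  have hsr : s ≤ r := (le_div_iff₀ ha).mpr hsa
  have hrt : r ≤ t := (div_le_iff₀ ha).mpr hbt
  have hr1 : r ≤ 1 := hrt.trans ht
  have hab : a ^ (1 - v) * b ^ v = a * r ^ v := by
    have hb' : b = a * r := by rw [hr]; field_simp
    rw [hb', Real.mul_rpow ha.le hr0.le, ← mul_assoc, ← Real.rpow_add ha]
    norm_num
  have hsum : (1 - v) * a + v * b = ((1 - v) + v * r) / r ^ v * (a * r ^ v) := by
    have hrv : (0:ℝ) < r ^ v := Real.rpow_pos_of_pos hr0 v
    have hb' : b = a * r := by rw [hr]; field_simp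
    rw [hb']
    field_simp
  have hrv : (0:ℝ) < r ^ v := Real.rpow_pos_of_pos hr0 v
  have h1 := aux_anti v hv0 hv1 hr0 hrt ht
  have h2 := aux_anti v hv0 hv1 hs hsr hr1
  constructor
  · rw [hab, hsum]
    have : (0:ℝ) ≤ a * r ^ v := by positivity
    exact mul_le_mul_of_nonneg_right h1 this
  · rw [hab, hsum]
    have : (0:ℝ) ≤ a * r ^ v := by positivity
    exact mul_le_mul_of_nonneg_right h2 this
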